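/- arXiv:2410.11676 — 2 statements merged into one kernel-verified Lean document; each statement's English description precedes it below -/
import Mathlib

section
/- Let A and G be symmetric positive semidefinite n×n real matrices with A ⪯ G (Loewner order), and let u ∈ ℝⁿ with (G−A)u ≠ 0. Define G₊ = G − ((G−A)u uᵀ(G−A))/(uᵀ(G−A)u). Then A ⪯ G₊ ⪯ G. -/
open Matrix

/-- SR1 update preserves the Loewner order: if `0 ⪯ A ⪯ G` and `(G - A) u ≠ 0`, then
for `G₊ = G - ((G-A)u uᵀ(G-A)) / (uᵀ(G-A)u)` we have `A ⪯ G₊ ⪯ G`. -/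
theorem stmt_0 {n : ℕ} (A G : Matrix (Fin n) (Fin n) ℝ)
    (hA : A.PosSemidef) (hG : G.PosSemidef)
    (hAG : ∀ z : Fin n → ℝ, 0 ≤ z ⬝ᵥ ((G - A) *ᵥ z))
    (u : Fin n → ℝ) (hu : (G - A) *ᵥ u ≠ 0)
    (Gp : Matrix (Fin n) (Fin n) ℝ)
    (hGp : Gp = G - (u ⬝ᵥ ((G - A) *ᵥ u))⁻¹ •
      vecMulVec ((G - A) *ᵥ u) ((G - A) *ᵥ u)) :
    (∀ z : Fin n → ℝ, 0 ≤ z ⬝ᵥ ((Gp - A) *ᵥ z)) ∧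
    (∀ z : Fin n → ℝ, 0 ≤ z ⬝ᵥ ((G - Gp) *ᵥ z)) := by
  set E := G - A with hE
  have hE1 : E.IsHermitian := hG.1.sub hA.1
  have hEij : ∀ i j, E i j = E j i := by
    intro i j
    have := congrFun (congrFun hE1 i) j
    simpa using this.symm
  have hEpsd : E.PosSemidef := by
    refine .of_dotProduct_mulVec_nonneg hE1 fun x => ?_
    simpa using hAG x
  have hsym : ∀ x y : Fin n → ℝ, x ⬝ᵥ E *ᵥ y = y ⬝ᵥ E *ᵥ x := by
    intro x y
    simp only [dotProduct, mulVec, Finset.mul_sum]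
    rw [Finset.sum_comm]
    refine Finset.sum_congr rfl fun i _ => Finset.sum_congr rfl fun j _ => ?_
    rw [hEij j i]; ring
  set w : Fin n → ℝ := E *ᵥ u with hw
  set c : ℝ := u ⬝ᵥ w with hc
  have hc0 : 0 < c := by
    rcases lt_or_eq_of_le (hAG u) with h | h
    · exact h
    · exfalso
      apply hu
      have := (hEpsd.dotProduct_mulVec_zero_iff u).mp (by simpa using h.symm)
      simpa using this
  have hVq : ∀ z : Fin n → ℝ, z ⬝ᵥ (vecMulVec w w *ᵥ z) = (w ⬝ᵥ z) * (w ⬝ᵥ z) := by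
    intro z
    simp only [dotProduct, mulVec, vecMulVec_apply, Finset.mul_sum, Finset.sum_mul]
    refine Finset.sum_congr rfl fun i _ => Finset.sum_congr rfl fun j _ => ?_
    ring
  have key : ∀ z : Fin n → ℝ, (w ⬝ᵥ z) * (w ⬝ᵥ z) ≤ c * (z ⬝ᵥ E *ᵥ z) := by
    intro z
    have hquad : ∀ t : ℝ, 0 ≤ c * (t * t) + (2 * (w ⬝ᵥ z)) * t + (z ⬝ᵥ E *ᵥ z) := by
      intro t
      have h := hAG (z + t • u)
      have hexp : (z + t • u) ⬝ᵥ (E *ᵥ (z + t • u))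
          = c * (t * t) + (2 * (w ⬝ᵥ z)) * t + (z ⬝ᵥ E *ᵥ z) := by
        rw [mulVec_add, mulVec_smul, dotProduct_add, add_dotProduct, add_dotProduct,
          smul_dotProduct, dotProduct_smul, smul_dotProduct, dotProduct_smul]
        have h1 : u ⬝ᵥ E *ᵥ z = z ⬝ᵥ E *ᵥ u := hsym u z
        have h2 : w ⬝ᵥ z = z ⬝ᵥ w := dotProduct_comm w z
        simp only [smul_eq_mul, h1, hc, hw, h2]
        rw [dotProduct_comm (E *ᵥ u) z]
        ring
      rw [hexp] at h
      exact h
    have hd := discrim_le_zero hquad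
    rw [discrim] at hd
    nlinarith [hd]
  constructor
  · intro z
    rw [hGp]
    have hcalc : (G - (u ⬝ᵥ (G - A) *ᵥ u)⁻¹ • vecMulVec ((G - A) *ᵥ u) ((G - A) *ᵥ u) - A)
        = E - c⁻¹ • vecMulVec w w := by
      rw [hE]; abel
    rw [hcalc, sub_mulVec, dotProduct_sub, smul_mulVec, dotProduct_smul, smul_eq_mul, hVq]
    have hk := key z
    have : c⁻¹ * ((w ⬝ᵥ z) * (w ⬝ᵥ z)) ≤ z ⬝ᵥ E *ᵥ z := by
      rw [inv_mul_le_iff₀ hc0]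
      exact hk
    linarith
  · intro z
    rw [hGp]
    have hcalc : (G - (G - (u ⬝ᵥ (G - A) *ᵥ u)⁻¹ • vecMulVec ((G - A) *ᵥ u) ((G - A) *ᵥ u)))
        = c⁻¹ • vecMulVec w w := by
      rw [← hE, ← hw, ← hc]; abel
    rw [hcalc, smul_mulVec, dotProduct_smul, smul_eq_mul, hVq]
    exact mul_nonneg (inv_nonneg.mpr hc0.le) (mul_self_nonneg _)
end

section
/- Let f : ℝⁿ → ℝ be μ-strongly convex and twice differentiable, g : ℝⁿ → ℝ ∪ {+∞} proper convex lsc, and F = g + f. Let G̃ be symmetric with G̃ ⪰ J where J = ∫₀¹ ∇²f(x + t u)dt and u = x₊ − x. Suppose x₊ satisfies the optimality condition 0 ∈ ∂g(x₊) + ∇f(x) + G̃ u. Then F(x₊) − F(x) ≤ −(μ/2)‖u‖². -/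
open scoped RealInnerProductSpace

lemma aux_line {E : Type*} [NormedAddCommGroup E] [NormedSpace ℝ E] (p v : E) (t : ℝ) :
    HasDerivAt (fun s : ℝ => p + s • v) v t := by
  simpa using ((hasDerivAt_id t).smul_const v).const_add p

lemma aux_grad_ineq {E : Type*} [NormedAddCommGroup E] [NormedSpace ℝ E]
    {φ : E → ℝ} (hφ : ConvexOn ℝ Set.univ φ) {p v : E} {D : ℝ}
    (hd : HasDerivAt (fun t : ℝ => φ (p + t • v)) D 0) :
    φ p + D ≤ φ (p + v) := by
  have hψ : ConvexOn ℝ Set.univ (fun t : ℝ => φ (p + t • v)) := by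
    have h := hφ.comp_affineMap (AffineMap.lineMap p (p + v))
    have : (φ ∘ (AffineMap.lineMap p (p + v))) = fun t : ℝ => φ (p + t • v) := by
      funext t
      simp [AffineMap.lineMap_apply, add_comm]
    rw [this] at h
    simpa using h
  have h := hψ.le_slope_of_hasDerivAt (Set.mem_univ (0:ℝ)) (Set.mem_univ (1:ℝ)) one_pos hd
  rw [slope_def_field] at h
  simp at h
  linarith


/-- Descent lemma: if `f` is `μ`-strongly convex and twice differentiable, `g` proper
convex lsc, `F = g + f`, `G̃ ⪰ J = ∫₀¹ ∇²f(x + tu) dt` and `x₊` satisfies the optimality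
condition `0 ∈ ∂g(x₊) + ∇f(x) + G̃ u` with `u = x₊ - x`, then
`F(x₊) - F(x) ≤ -(μ/2)‖u‖²`. -/
theorem stmt_13 {n : ℕ} (μ : ℝ) (hμ : 0 < μ)
    (f : EuclideanSpace ℝ (Fin n) → ℝ)
    (f' : EuclideanSpace ℝ (Fin n) → EuclideanSpace ℝ (Fin n))
    (Hess : EuclideanSpace ℝ (Fin n) →
      (EuclideanSpace ℝ (Fin n) →L[ℝ] EuclideanSpace ℝ (Fin n)))
    (hf : ∀ y, HasGradientAt f (f' y) y)
    (hf' : ∀ y, HasFDerivAt f' (Hess y) y)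
    (hcont : Continuous Hess)
    (hsc : StrongConvexOn Set.univ μ f)
    (g : EuclideanSpace ℝ (Fin n) → EReal)
    (hproper : ∃ z, g z ≠ ⊤) (hnotbot : ∀ z, g z ≠ ⊥)
    (hlsc : LowerSemicontinuous g)
    (hconv : ∀ a b : EuclideanSpace ℝ (Fin n), ∀ t : ℝ, 0 ≤ t → t ≤ 1 →
      g (t • a + (1 - t) • b) ≤ (t : EReal) * g a + ((1 - t : ℝ) : EReal) * g b)
    (x xp : EuclideanSpace ℝ (Fin n))
    (Gt : EuclideanSpace ℝ (Fin n) →L[ℝ] EuclideanSpace ℝ (Fin n))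
    (hGsym : ∀ a b, ⟪Gt a, b⟫ = ⟪a, Gt b⟫)
    (hGJ : ∀ v : EuclideanSpace ℝ (Fin n),
      ⟪(∫ t in (0:ℝ)..1, Hess (x + t • (xp - x))) v, v⟫ ≤ ⟪Gt v, v⟫)
    -- optimality condition: `-∇f(x) - G̃ u ∈ ∂g(x₊)`
    (hopt : ∀ z, g xp + ((⟪-(f' x) - Gt (xp - x), z - xp⟫ : ℝ) : EReal) ≤ g z) :
    g xp + (f xp : EReal) + ((μ / 2 * ‖xp - x‖ ^ 2 : ℝ) : EReal) ≤
      g x + (f x : EReal) := by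
  set u : EuclideanSpace ℝ (Fin n) := xp - x with hu
  set v : EuclideanSpace ℝ (Fin n) := x - xp with hv
  -- Step 1: strong convexity gradient inequality
  have hconvφ : ConvexOn ℝ Set.univ (fun y => f y - μ / 2 * ‖y‖ ^ 2) :=
    (strongConvexOn_iff_convex).mp hsc
  have hline := aux_line xp v 0
  have hf_d : HasDerivAt (fun t : ℝ => f (xp + t • v)) ⟪f' xp, v⟫ 0 := by
    have hF : HasFDerivAt f ((InnerProductSpace.toDual ℝ _) (f' xp)) (xp + (0:ℝ) • v) := by
      simpa using (hf xp).hasFDerivAt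
    have h := hF.comp_hasDerivAt 0 hline
    simp at h
    exact h
  have hn_d : HasDerivAt (fun t : ℝ => ⟪xp + t • v, xp + t • v⟫)
      (⟪xp, v⟫ + ⟪v, xp⟫) 0 := by
    simpa using hline.inner ℝ hline
  have hφ_d : HasDerivAt
      (fun t : ℝ => f (xp + t • v) - μ / 2 * ‖xp + t • v‖ ^ 2)
      (⟪f' xp, v⟫ - μ / 2 * (⟪xp, v⟫ + ⟪v, xp⟫)) 0 := by
    have h := hf_d.sub (hn_d.const_mul (μ / 2))
    have heq : (fun t : ℝ => f (xp + t • v) - μ / 2 * ⟪xp + t • v, xp + t • v⟫)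
        = fun t : ℝ => f (xp + t • v) - μ / 2 * ‖xp + t • v‖ ^ 2 := by
      funext t; rw [real_inner_self_eq_norm_sq]
    rw [← heq]; exact h
  have hA := aux_grad_ineq hconvφ hφ_d
  rw [show xp + v = x by simp [hv]] at hA
  -- hA : f xp - μ/2‖xp‖² + (⟪f' xp, v⟫ - μ/2(⟪xp,v⟫+⟪v,xp⟫)) ≤ f x - μ/2‖x‖²
  have hA' : f xp + μ / 2 * ‖u‖ ^ 2 ≤ f x + ⟪f' xp, u⟫ := by
    have e1 : ⟪f' xp, v⟫ = -⟪f' xp, u⟫ := by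
      rw [show v = -u by simp [hu, hv], inner_neg_right]
    have e2 : ‖u‖ ^ 2 = ‖xp‖ ^ 2 - 2 * ⟪xp, x⟫ + ‖x‖ ^ 2 := by
      rw [hu]; exact norm_sub_sq_real xp x
    have e3 : ⟪xp, v⟫ = ⟪xp, x⟫ - ‖xp‖ ^ 2 := by
      rw [hv, inner_sub_right, real_inner_self_eq_norm_sq]
    have e4 : ⟪v, xp⟫ = ⟪xp, x⟫ - ‖xp‖ ^ 2 := by
      rw [hv, inner_sub_left, real_inner_self_eq_norm_sq, real_inner_comm]
    have e2' : μ / 2 * ‖u‖ ^ 2 = μ / 2 * (‖xp‖ ^ 2 - 2 * ⟪xp, x⟫ + ‖x‖ ^ 2) := by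
      rw [e2]
    rw [e1, e3, e4] at hA
    nlinarith [hA, e2']
  -- Step 2: mean value inequality via Hessian integral
  have hlin : Continuous fun t : ℝ => x + t • u :=
    continuous_const.add (continuous_id.smul continuous_const)
  have hder : ∀ t : ℝ, HasDerivAt (fun s : ℝ => ⟪u, f' (x + s • u)⟫)
      ⟪u, (Hess (x + t • u)) u⟫ t := by
    intro t
    have h1 : HasDerivAt (fun s : ℝ => f' (x + s • u)) ((Hess (x + t • u)) u) t := by
      have h := (hf' (x + t • u)).comp_hasDerivAt t (aux_line x u t)
      exact h
    have h := ((innerSL ℝ u).hasFDerivAt.comp_hasDerivAt t h1)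
    simp at h
    exact h
  have hcontHu : Continuous fun t : ℝ => (Hess (x + t • u)) u := by
    exact ((ContinuousLinearMap.apply ℝ _ u).continuous).comp (hcont.comp hlin)
  have hcont2 : Continuous fun t : ℝ => ⟪u, (Hess (x + t • u)) u⟫ :=
    continuous_const.inner hcontHu
  have hftc := intervalIntegral.integral_eq_sub_of_hasDerivAt
    (f := fun s : ℝ => ⟪u, f' (x + s • u)⟫) (fun t _ => hder t)
    (hcont2.intervalIntegrable 0 1)
  have hφint : IntervalIntegrable (fun t : ℝ => Hess (x + t • u))
      MeasureTheory.volume 0 1 := (hcont.comp hlin).intervalIntegrable 0 1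
  have happly := ContinuousLinearMap.intervalIntegral_apply hφint u
  have hintHu : IntervalIntegrable (fun t : ℝ => (Hess (x + t • u)) u)
      MeasureTheory.volume 0 1 := hcontHu.intervalIntegrable 0 1
  have hcomm := ContinuousLinearMap.intervalIntegral_comp_comm (innerSL ℝ u) hintHu
  -- combine: ⟪u, f' xp⟫ - ⟪u, f' x⟫ = ⟪u, (∫ Hess) u⟫
  have hkey : ⟪u, f' xp⟫ - ⟪u, f' x⟫
      = ⟪u, (∫ t in (0:ℝ)..1, Hess (x + t • u)) u⟫ := by
    rw [happly]
    simp only [innerSL_apply_apply] at hcomm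
    rw [← hcomm, hftc]
    simp [hu]
  have hB : ⟪f' xp, u⟫ ≤ ⟪f' x, u⟫ + ⟪Gt u, u⟫ := by
    have h2 : ⟪u, (∫ t in (0:ℝ)..1, Hess (x + t • u)) u⟫ ≤ ⟪Gt u, u⟫ :=
      le_of_eq_of_le (real_inner_comm _ u) (hGJ u)
    rw [real_inner_comm u (f' xp), real_inner_comm u (f' x)]
    linarith [hkey, h2]
  -- Step 3: optimality condition
  have hopt' := hopt x
  have hc : ⟪-(f' x) - Gt u, x - xp⟫ = ⟪f' x, u⟫ + ⟪Gt u, u⟫ := by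
    rw [show x - xp = -u by simp [hu], inner_neg_right, inner_sub_left, inner_neg_left]
    ring
  rw [hc] at hopt'
  -- Step 4: combine in EReal
  set c : ℝ := ⟪f' x, u⟫ + ⟪Gt u, u⟫ with hcdef
  have hreal : f xp + μ / 2 * ‖u‖ ^ 2 ≤ c + f x := by
    rw [hcdef]; linarith
  calc g xp + (f xp : EReal) + ((μ / 2 * ‖u‖ ^ 2 : ℝ) : EReal)
      = g xp + ((f xp + μ / 2 * ‖u‖ ^ 2 : ℝ) : EReal) := by
        rw [add_assoc, ← EReal.coe_add]
    _ ≤ g xp + ((c + f x : ℝ) : EReal) := by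
        exact add_le_add_right (EReal.coe_le_coe_iff.mpr hreal) _
    _ = (g xp + (c : EReal)) + ((f x : ℝ) : EReal) := by
        rw [EReal.coe_add, ← add_assoc]
    _ ≤ g x + (f x : EReal) := add_le_add_left hopt' _
end
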